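/- Let n ≥ 3 and let (ℓ, r) be an ordered pair of nonempty permutations with |ℓ| + |r| = n − 1 such that s(ℓ) avoids 132 and 312 and s(r) avoids 132 and 312. Then there are exactly two permutations p of length n such that p = LnR (where n is the maximum entry of p), the subsequence L of entries preceding n is order-isomorphic to ℓ, the subsequence R of entries following n is order-isomorphic to r, and s(p) avoids both 132 and 312. -/

import Mathlib

/-- The stack-sorting map `s`, implemented with a fuel parameter (the fuel
`l.length` always suffices, since the maximum of a nonempty list of naturals is
attained, so both recursive calls are on strictly shorter lists).
`s(ε) = ε` and `s(LmR) = s(L) s(R) m` where `m` is the maximum entry. -/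
def stackSortAux : ℕ → List ℕ → List ℕ
  | 0, _ => []
  | _ + 1, [] => []
  | fuel + 1, a :: t =>
      let m := (a :: t).foldr max 0
      stackSortAux fuel ((a :: t).takeWhile (fun x => x ≠ m)) ++
        stackSortAux fuel (((a :: t).dropWhile (fun x => x ≠ m)).tail) ++ [m]

/-- The stack-sorting map on finite sequences of (distinct) naturals. -/
def stackSort (l : List ℕ) : List ℕ := stackSortAux l.length l

/-- `l` is a permutation of `{1, 2, …, n}`, written in one-line notation. -/
def IsPermList (n : ℕ) (l : List ℕ) : Prop :=
  l.Perm ((List.range n).map (· + 1))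

/-- The sequence `p` contains the pattern `q`: there is a strictly increasing choice
of positions of `p` on which the entries compare exactly as the entries of `q` do. -/
def ContainsPat (p q : List ℕ) : Prop :=
  ∃ f : Fin q.length → Fin p.length, StrictMono f ∧
    ∀ i j : Fin q.length, q.get i < q.get j ↔ p.get (f i) < p.get (f j)

/-- The sequence `p` avoids the pattern `q`. -/
def AvoidsPat (p q : List ℕ) : Prop := ¬ ContainsPat p q

/-- Two sequences of distinct integers are order-isomorphic: same length, and
entries in corresponding positions compare the same way. -/
def OrderIsoList (u v : List ℕ) : Prop :=
  ∃ h : u.length = v.length,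
    ∀ i j : Fin u.length,
      u.get i < u.get j ↔ v.get (Fin.cast h i) < v.get (Fin.cast h j)

section Aux

theorem List.get_map {α β : Type*} (f : α → β) {l : List α} {n : Fin (l.map f).length} :
    (l.map f).get n = f (l.get ⟨n, by simpa using n.2⟩) := by
  simp

-- max facts
lemma foldr_max_mem : ∀ (a : ℕ) (t : List ℕ), (a :: t).foldr max 0 ∈ a :: t := by
  intro a t
  induction t generalizing a with
  | nil => simp
  | cons b t ih =>
    have h := ih b
    simp only [List.foldr_cons] at h ⊢
    rcases max_choice a (b ⊔ List.foldr max 0 t) with h1 | h1 <;> rw [h1]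
    · exact List.mem_cons_self
    · exact List.mem_cons_of_mem _ h

lemma le_foldr_max : ∀ (l : List ℕ), ∀ x ∈ l, x ≤ l.foldr max 0 := by
  intro l
  induction l with
  | nil => simp
  | cons a t ih =>
    intro x hx
    rcases List.mem_cons.1 hx with rfl | hx
    · exact le_max_left _ _
    · exact le_trans (ih x hx) (le_max_right _ _)

lemma dropWhile_ne_max {l : List ℕ} {m : ℕ} (hm : m ∈ l) :
    ∃ t2, l.dropWhile (fun x => x ≠ m) = m :: t2 := by
  induction l with
  | nil => simp at hm
  | cons a t ih =>
    by_cases ha : a = m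
    · subst ha
      exact ⟨t, by simp [List.dropWhile_cons]⟩
    · rcases List.mem_cons.1 hm with h | h
      · exact absurd h.symm ha
      · rcases ih h with ⟨t2, ht2⟩
        refine ⟨t2, ?_⟩
        simpa [List.dropWhile_cons, ha] using ht2

lemma split_max (a : ℕ) (t : List ℕ) :
    ∃ T D, a :: t = T ++ ((a :: t).foldr max 0) :: D ∧
      T = (a :: t).takeWhile (fun x => x ≠ (a :: t).foldr max 0) ∧
      D = ((a :: t).dropWhile (fun x => x ≠ (a :: t).foldr max 0)).tail := by
  set m := (a :: t).foldr max 0 with hm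
  rcases dropWhile_ne_max (foldr_max_mem a t) with ⟨t2, ht2⟩
  refine ⟨(a :: t).takeWhile (fun x => x ≠ m), t2, ?_, rfl, by rw [ht2]; rfl⟩
  conv_lhs => rw [← List.takeWhile_append_dropWhile (p := fun x => x ≠ m) (l := a :: t)]
  rw [ht2]


lemma stackSortAux_nil : ∀ f, stackSortAux f [] = [] := by
  intro f; cases f <;> rfl

lemma takeWhile_congr' {p q : ℕ → Bool} :
    ∀ (l : List ℕ), (∀ x ∈ l, p x = q x) →
      l.takeWhile p = l.takeWhile q ∧ l.dropWhile p = l.dropWhile q := by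
  intro l
  induction l with
  | nil => simp
  | cons a t ih =>
    intro h
    have ha := h a (List.mem_cons_self)
    have ht := ih (fun x hx => h x (List.mem_cons_of_mem _ hx))
    by_cases hpa : p a = true
    · rw [List.takeWhile_cons, List.dropWhile_cons, List.takeWhile_cons, List.dropWhile_cons,
        hpa, ← ha, hpa]
      simp only [if_true, ht.1, ht.2, and_self]
    · simp only [Bool.not_eq_true] at hpa
      rw [List.takeWhile_cons, List.dropWhile_cons, List.takeWhile_cons, List.dropWhile_cons,
        hpa, ← ha, hpa]
      simp

lemma length_T_le (a : ℕ) (t : List ℕ) :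
    ((a :: t).takeWhile (fun x => x ≠ (a :: t).foldr max 0)).length ≤ t.length ∧
    (((a :: t).dropWhile (fun x => x ≠ (a :: t).foldr max 0)).tail).length ≤ t.length := by
  rcases split_max a t with ⟨T, D, hsplit, hT, hD⟩
  have hlen : T.length + (D.length + 1) = t.length + 1 := by
    have := congrArg List.length hsplit
    simpa using this.symm
  constructor
  · rw [← hT]; omega
  · rw [← hD]; omega

lemma stackSortAux_fuel_aux : ∀ (N : ℕ) (l : List ℕ), l.length ≤ N →
    ∀ f1 f2, l.length ≤ f1 → l.length ≤ f2 → stackSortAux f1 l = stackSortAux f2 l := by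
  intro N
  induction N with
  | zero =>
    intro l hl f1 f2 _ _
    rw [List.length_eq_zero_iff.1 (Nat.le_zero.1 hl), stackSortAux_nil, stackSortAux_nil]
  | succ N ih =>
    intro l hl f1 f2 h1 h2
    cases l with
    | nil => rw [stackSortAux_nil, stackSortAux_nil]
    | cons a t =>
      have hlt := length_T_le a t
      simp only [List.length_cons] at hl h1 h2
      cases f1 with
      | zero => omega
      | succ g1 =>
        cases f2 with
        | zero => omega
        | succ g2 =>
          simp only [stackSortAux]
          rw [ih _ (le_trans hlt.1 (by omega)) g1 g2 (by omega) (by omega),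
            ih _ (le_trans hlt.2 (by omega)) g1 g2 (by omega) (by omega)]

lemma stackSortAux_fuel {l : List ℕ} {f1 f2 : ℕ} (h1 : l.length ≤ f1) (h2 : l.length ≤ f2) :
    stackSortAux f1 l = stackSortAux f2 l :=
  stackSortAux_fuel_aux l.length l (le_refl _) f1 f2 h1 h2

lemma stackSortAux_perm : ∀ (f : ℕ) (l : List ℕ), l.length ≤ f →
    (stackSortAux f l).Perm l := by
  intro f
  induction f with
  | zero => intro l hl; rw [List.length_eq_zero_iff.1 (Nat.le_zero.1 hl)]; rfl
  | succ f ih =>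
    intro l hl
    cases l with
    | nil => rw [stackSortAux_nil]
    | cons a t =>
      rcases split_max a t with ⟨T, D, hsplit, hT, hD⟩
      have hlt := length_T_le a t
      simp only [List.length_cons] at hl
      have ht : t.length ≤ f := by omega
      simp only [stackSortAux]
      rw [← hT, ← hD]
      have p1 := ih T (by rw [hT]; exact le_trans hlt.1 ht)
      have p2 := ih D (by rw [hD]; exact le_trans hlt.2 ht)
      have step1 : (stackSortAux f T ++ stackSortAux f D ++ [(a :: t).foldr max 0]).Perm
          (T ++ D ++ [(a :: t).foldr max 0]) := (p1.append p2).append_right _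
      have step2 : (T ++ D ++ [(a :: t).foldr max 0]).Perm (T ++ (a :: t).foldr max 0 :: D) := by
        rw [List.append_assoc]
        exact (List.perm_append_singleton _ _).append_left T
      rw [← hsplit] at step2
      exact step1.trans step2

lemma stackSort_perm (l : List ℕ) : (stackSort l).Perm l :=
  stackSortAux_perm l.length l (le_refl _)


lemma foldr_max_map {g : ℕ → ℕ} (a : ℕ) (t : List ℕ)
    (hg : ∀ x ∈ a :: t, ∀ y ∈ a :: t, (x < y ↔ g x < g y)) :
    ((a :: t).map g).foldr max 0 = g ((a :: t).foldr max 0) := by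
  set m := (a :: t).foldr max 0 with hm
  have hmem : m ∈ a :: t := foldr_max_mem a t
  have hle : ∀ y ∈ (a :: t).map g, y ≤ g m := by
    intro y hy
    rcases List.mem_map.1 hy with ⟨x, hx, rfl⟩
    rcases lt_or_eq_of_le (le_foldr_max _ x hx) with h | h
    · exact le_of_lt ((hg x hx m hmem).1 h)
    · rw [h]
  have h1 : ((a :: t).map g).foldr max 0 ≤ g m := by
    rw [List.map_cons]
    exact hle _ (by rw [← List.map_cons]; exact foldr_max_mem _ _)
  have h2 : g m ≤ ((a :: t).map g).foldr max 0 :=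
    le_foldr_max _ _ (List.mem_map_of_mem hmem)
  omega

lemma stackSortAux_map (g : ℕ → ℕ) : ∀ (f : ℕ) (l : List ℕ),
    (∀ x ∈ l, ∀ y ∈ l, (x < y ↔ g x < g y)) →
    stackSortAux f (l.map g) = (stackSortAux f l).map g := by
  intro f
  induction f with
  | zero => intros; rfl
  | succ f ih =>
    intro l hg
    cases l with
    | nil => rfl
    | cons a t =>
      set m := (a :: t).foldr max 0 with hm
      have hmem : m ∈ a :: t := foldr_max_mem a t
      have hmax := foldr_max_map a t hg
      have key : ∀ x ∈ a :: t, (decide (g x ≠ g m) : Bool) = decide (x ≠ m) := by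
        intro x hx
        have : g x ≠ g m ↔ x ≠ m := by
          constructor
          · intro h h'; exact h (by rw [h'])
          · intro h
            rcases lt_trichotomy x m with h' | h' | h'
            · exact ne_of_lt ((hg x hx m hmem).1 h')
            · exact absurd h' h
            · exact (ne_of_lt ((hg m hmem x hx).1 h')).symm
        simp [this]
      have hTW : ((a :: t).map g).takeWhile (fun x => x ≠ g m) =
          ((a :: t).takeWhile (fun x => x ≠ m)).map g := by
        rw [List.takeWhile_map]
        congr 1
        exact (takeWhile_congr' _ key).1
      have hDW : ((a :: t).map g).dropWhile (fun x => x ≠ g m) =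
          ((a :: t).dropWhile (fun x => x ≠ m)).map g := by
        rw [List.dropWhile_map]
        congr 1
        exact (takeWhile_congr' _ key).2
      have hsub1 : ∀ x ∈ (a :: t).takeWhile (fun x => x ≠ m), x ∈ a :: t :=
        fun x hx => (List.takeWhile_sublist _).subset hx
      have hsub2 : ∀ x ∈ ((a :: t).dropWhile (fun x => x ≠ m)).tail, x ∈ a :: t :=
        fun x hx => (List.dropWhile_sublist _).subset ((List.tail_sublist _).subset hx)
      have ih1 := ih ((a :: t).takeWhile (fun x => x ≠ m))
        (fun x hx y hy => hg x (hsub1 x hx) y (hsub1 y hy))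
      have ih2 := ih (((a :: t).dropWhile (fun x => x ≠ m)).tail)
        (fun x hx y hy => hg x (hsub2 x hx) y (hsub2 y hy))
      show stackSortAux (f+1) ((a :: t).map g) = _
      rw [List.map_cons]
      simp only [stackSortAux]
      rw [← List.map_cons]
      rw [hmax, ← hm, hTW, hDW, ih1]
      rw [show (((a :: t).dropWhile (fun x => x ≠ m)).map g).tail =
        (((a :: t).dropWhile (fun x => x ≠ m)).tail).map g from List.map_tail.symm]
      rw [ih2]
      simp [← hm]

lemma stackSort_map {g : ℕ → ℕ} {l : List ℕ}
    (hg : ∀ x ∈ l, ∀ y ∈ l, (x < y ↔ g x < g y)) :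
    stackSort (l.map g) = (stackSort l).map g := by
  unfold stackSort
  rw [List.length_map]
  exact stackSortAux_map g l.length l hg


-- split lemma
lemma takeWhile_eq_left {p : ℕ → Bool} :
    ∀ (L : List ℕ) (n : ℕ) (R : List ℕ), (∀ x ∈ L, p x = true) → p n = false →
      (L ++ n :: R).takeWhile p = L ∧ (L ++ n :: R).dropWhile p = n :: R := by
  intro L
  induction L with
  | nil => intro n R _ hn; simp [List.takeWhile_cons, List.dropWhile_cons, hn]
  | cons a t ih =>
    intro n R hL hn
    have ha := hL a (List.mem_cons_self)
    have ht := ih n R (fun x hx => hL x (List.mem_cons_of_mem _ hx)) hn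
    simp only [List.cons_append, List.takeWhile_cons, List.dropWhile_cons, ha, if_true]
    exact ⟨by rw [ht.1], ht.2⟩

lemma stackSort_split {L R : List ℕ} {n : ℕ} (hL : ∀ x ∈ L, x < n) (hR : ∀ x ∈ R, x < n) :
    stackSort (L ++ n :: R) = stackSort L ++ stackSort R ++ [n] := by
  have hlen : (L ++ n :: R).length = (L.length + R.length) + 1 := by simp; omega
  have hmax : (L ++ n :: R).foldr max 0 = n := by
    have h1 : n ≤ (L ++ n :: R).foldr max 0 := le_foldr_max _ n (by simp)
    have h2 : (L ++ n :: R).foldr max 0 ≤ n := by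
      rcases List.exists_cons_of_ne_nil (by simp : L ++ n :: R ≠ []) with ⟨a, t, hc⟩
      have hm : (L ++ n :: R).foldr max 0 ∈ L ++ n :: R := by
        rw [hc]; exact foldr_max_mem a t
      rcases List.mem_append.1 hm with h | h
      · exact le_of_lt (hL _ h)
      · rcases List.mem_cons.1 h with h | h
        · omega
        · exact le_of_lt (hR _ h)
    omega
  have hked := takeWhile_eq_left L n R (p := fun x => x ≠ n)
    (fun x hx => by simpa using Nat.ne_of_lt (hL x hx)) (by simp)
  unfold stackSort
  rw [hlen]
  rcases List.exists_cons_of_ne_nil (by simp : L ++ n :: R ≠ []) with ⟨a, t, hc⟩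
  have hlen2 : t.length = L.length + R.length := by
    have := congrArg List.length hc; rw [hlen] at this; simpa using this.symm
  rw [hc]
  simp only [stackSortAux]
  rw [← hc, hmax, hked.1, hked.2]
  simp only [List.tail_cons]
  rw [stackSortAux_fuel (f2 := L.length) (by omega) (le_refl _),
    stackSortAux_fuel (f2 := R.length) (by omega) (le_refl _)]

-- pattern lemmas
lemma containsPat_132_iff (w : List ℕ) : ContainsPat w [1,3,2] ↔
    ∃ i j k : Fin w.length, i < j ∧ j < k ∧ w.get i < w.get k ∧ w.get k < w.get j := by
  constructor
  · rintro ⟨f, hf, hcmp⟩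
    refine ⟨f ⟨0, by norm_num⟩, f ⟨1, by norm_num⟩, f ⟨2, by norm_num⟩,
      hf (by decide), hf (by decide), ?_, ?_⟩
    · exact (hcmp ⟨0, by norm_num⟩ ⟨2, by norm_num⟩).1 (by decide)
    · exact (hcmp ⟨2, by norm_num⟩ ⟨1, by norm_num⟩).1 (by decide)
  · rintro ⟨i, j, k, hij, hjk, h1, h2⟩
    refine ⟨fun t => if t.val = 0 then i else if t.val = 1 then j else k, ?_, ?_⟩
    · intro a b hab
      fin_cases a <;> fin_cases b <;> simp_all <;> omega
    · intro x y
      have hik : i < k := lt_trans hij hjk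
      simp only [List.get_eq_getElem] at h1 h2 ⊢
      fin_cases x <;> fin_cases y <;>
        simp only [List.get, if_true, if_false] <;> norm_num <;> omega

lemma containsPat_312_iff (w : List ℕ) : ContainsPat w [3,1,2] ↔
    ∃ i j k : Fin w.length, i < j ∧ j < k ∧ w.get j < w.get k ∧ w.get k < w.get i := by
  constructor
  · rintro ⟨f, hf, hcmp⟩
    refine ⟨f ⟨0, by norm_num⟩, f ⟨1, by norm_num⟩, f ⟨2, by norm_num⟩,
      hf (by decide), hf (by decide), ?_, ?_⟩
    · exact (hcmp ⟨1, by norm_num⟩ ⟨2, by norm_num⟩).1 (by decide)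
    · exact (hcmp ⟨2, by norm_num⟩ ⟨0, by norm_num⟩).1 (by decide)
  · rintro ⟨i, j, k, hij, hjk, h1, h2⟩
    refine ⟨fun t => if t.val = 0 then i else if t.val = 1 then j else k, ?_, ?_⟩
    · intro a b hab
      fin_cases a <;> fin_cases b <;> simp_all <;> omega
    · intro x y
      have hik : i < k := lt_trans hij hjk
      simp only [List.get_eq_getElem] at h1 h2 ⊢
      fin_cases x <;> fin_cases y <;>
        simp only [List.get, if_true, if_false] <;> norm_num <;> omega


set_option linter.unnecessarySeqFocus false

def MinMax (w : List ℕ) : Prop := ∀ i j k : Fin w.length, i < j → j < k →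
  (w.get k < w.get i ∧ w.get k < w.get j) ∨ (w.get i < w.get k ∧ w.get j < w.get k)

lemma avoids_iff_minMax {w : List ℕ} (hnd : w.Nodup) :
    (AvoidsPat w [1,3,2] ∧ AvoidsPat w [3,1,2]) ↔ MinMax w := by
  constructor
  · rintro ⟨h1, h2⟩ i j k hij hjk
    have hik : i < k := lt_trans hij hjk
    have e1 : w.get i ≠ w.get k := fun h => absurd (hnd.get_inj_iff.1 h) (Fin.ne_of_lt hik)
    have e2 : w.get j ≠ w.get k := fun h => absurd (hnd.get_inj_iff.1 h) (Fin.ne_of_lt hjk)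
    by_contra hcon
    push_neg at hcon
    rcases lt_trichotomy (w.get i) (w.get k) with hA | hA | hA
    · rcases lt_trichotomy (w.get j) (w.get k) with hB | hB | hB
      · exact absurd hB (not_lt.2 (hcon.2 hA))
      · exact e2 hB
      · exact h1 ((containsPat_132_iff w).2 ⟨i, j, k, hij, hjk, hA, hB⟩)
    · exact e1 hA
    · rcases lt_trichotomy (w.get j) (w.get k) with hB | hB | hB
      · exact h2 ((containsPat_312_iff w).2 ⟨i, j, k, hij, hjk, hB, hA⟩)
      · exact e2 hB
      · exact absurd hB (not_lt.2 (hcon.1 hA))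
  · intro hmm
    constructor
    · intro hc
      rcases (containsPat_132_iff w).1 hc with ⟨i, j, k, hij, hjk, hA, hB⟩
      rcases hmm i j k hij hjk with ⟨hx, hy⟩ | ⟨hx, hy⟩ <;> omega
    · intro hc
      rcases (containsPat_312_iff w).1 hc with ⟨i, j, k, hij, hjk, hA, hB⟩
      rcases hmm i j k hij hjk with ⟨hx, hy⟩ | ⟨hx, hy⟩ <;> omega

lemma finCast_strictMono {a b : ℕ} (h : a = b) : StrictMono (Fin.cast h) :=
  fun _ _ hxy => hxy

lemma containsPat_of_orderIso {p p' q : List ℕ} (h : OrderIsoList p p') :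
    ContainsPat p q → ContainsPat p' q := by
  rcases h with ⟨h, hiso⟩
  rintro ⟨f, hf, hcmp⟩
  exact ⟨fun i => Fin.cast h (f i), (finCast_strictMono h).comp hf,
    fun i j => (hcmp i j).trans (hiso (f i) (f j))⟩

lemma orderIsoList_symm {u v : List ℕ} (h : OrderIsoList u v) : OrderIsoList v u := by
  rcases h with ⟨h, hiso⟩
  exact ⟨h.symm, fun i j => (hiso (Fin.cast h.symm i) (Fin.cast h.symm j)).symm⟩

lemma avoidsPat_of_orderIso {p p' q : List ℕ} (h : OrderIsoList p p')
    (hav : AvoidsPat p' q) : AvoidsPat p q :=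
  fun hc => hav (containsPat_of_orderIso h hc)

lemma orderIsoList_map {w : List ℕ} {g : ℕ → ℕ}
    (hg : ∀ x ∈ w, ∀ y ∈ w, (x < y ↔ g x < g y)) : OrderIsoList (w.map g) w := by
  refine ⟨List.length_map g, fun i j => ?_⟩
  rw [List.get_map, List.get_map]
  exact (hg _ (List.get_mem _ _) _ (List.get_mem _ _)).symm

lemma orderIso_exists_map {u v : List ℕ} (h : OrderIsoList u v) (hv : v.Nodup) :
    ∃ g : ℕ → ℕ, u = v.map g ∧ ∀ x ∈ v, ∀ y ∈ v, (x < y ↔ g x < g y) := by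
  rcases h with ⟨hlen, hiso⟩
  refine ⟨fun x => u.getD (v.idxOf x) 0, ?_, ?_⟩
  · apply List.ext_get (by simp [hlen])
    intro i h1 h2
    have h2' : i < v.length := by simpa using h2
    have hidx : v.idxOf (v.get ⟨i, h2'⟩) = i := by
      apply List.Nodup.idxOf_getElem hv
    rw [List.get_map]
    simp only [hidx]
    rw [List.getD_eq_getElem _ _ (by omega : i < u.length)]
    rfl
  · intro x hx y hy
    rcases List.get_of_mem hx with ⟨ix, rfl⟩
    rcases List.get_of_mem hy with ⟨iy, rfl⟩
    have hix : v.idxOf (v.get ix) = ix.val := List.Nodup.idxOf_getElem hv _ _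
    have hiy : v.idxOf (v.get iy) = iy.val := List.Nodup.idxOf_getElem hv _ _
    show _ ↔ u.getD (List.idxOf (v.get ix) v) 0 < u.getD (List.idxOf (v.get iy) v) 0
    rw [hix, hiy, List.getD_eq_getElem _ _ (by omega : ix.val < u.length),
      List.getD_eq_getElem _ _ (by omega : iy.val < u.length)]
    have := hiso ⟨ix.val, by omega⟩ ⟨iy.val, by omega⟩
    simpa [Fin.cast] using this.symm

lemma orderIsoList_stackSort {u v : List ℕ} (h : OrderIsoList u v) (hv : v.Nodup) :
    OrderIsoList (stackSort u) (stackSort v) := by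
  rcases orderIso_exists_map h hv with ⟨g, rfl, hg⟩
  rw [stackSort_map hg]
  apply orderIsoList_map
  intro x hx y hy
  exact hg x ((stackSort_perm v).subset hx) y ((stackSort_perm v).subset hy)


-- countP machinery
lemma countP_congr_iso {u v : List ℕ} {p q : ℕ → Bool} :
    ∀ (h : u.length = v.length),
    (∀ i : Fin u.length, p (u.get i) = q (v.get (Fin.cast h i))) →
    u.countP p = v.countP q := by
  induction u generalizing v with
  | nil =>
    intro h _
    rw [(List.length_eq_zero_iff).1 h.symm]
    simp
  | cons a t ih =>
    intro h hpt
    cases v with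
    | nil => simp at h
    | cons b s =>
      simp only [List.length_cons, Nat.succ_inj] at h
      rw [List.countP_cons, List.countP_cons]
      have h0 := hpt ⟨0, by simp⟩
      simp only [List.get, Fin.cast_mk] at h0
      rw [ih h (fun i => by
        have := hpt i.succ
        simpa [List.get] using this), h0]

lemma countP_split (l : List ℕ) (p q : ℕ → Bool) (himp : ∀ z ∈ l, q z → p z) :
    l.countP p = l.countP q + l.countP (fun z => p z && !q z) := by
  induction l with
  | nil => simp
  | cons a t ih =>
    have ha := himp a (List.mem_cons_self)
    have ih' := ih (fun z hz => himp z (List.mem_cons_of_mem _ hz))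
    simp only [List.countP_cons, ih']
    by_cases hq : q a = true
    · simp [hq, ha hq]; omega
    · simp only [Bool.not_eq_true] at hq
      simp [hq]
      by_cases hp : p a = true <;> simp [hp] <;> omega

lemma countP_le_mono {l : List ℕ} {x y : ℕ} (hxy : x ≤ y) :
    l.countP (fun z => z ≤ x) ≤ l.countP (fun z => z ≤ y) :=
  List.countP_mono_left (fun z _ hz => by simp at hz ⊢; omega)

lemma countP_le_strict {l : List ℕ} {x y : ℕ} (hx : y ∈ l) (hxy : x < y) :
    l.countP (fun z => z ≤ x) < l.countP (fun z => z ≤ y) := by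
  rw [countP_split l (fun z => z ≤ y) (fun z => z ≤ x) (fun z _ hz => by simp at hz ⊢; omega)]
  have : 0 < l.countP (fun z => (z ≤ y) && !(z ≤ x)) := by
    rw [List.countP_pos_iff]
    exact ⟨y, hx, by simp; omega⟩
  omega

-- perm-list facts
lemma isPermList_nodup {m : ℕ} {l : List ℕ} (h : IsPermList m l) : l.Nodup :=
  h.nodup_iff.2 ((List.nodup_range (n := m)).map (fun x y hxy => by omega))

lemma isPermList_length {m : ℕ} {l : List ℕ} (h : IsPermList m l) : l.length = m := by
  have := h.length_eq; simpa using this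

lemma isPermList_mem {m : ℕ} {l : List ℕ} (h : IsPermList m l) (x : ℕ) :
    x ∈ l ↔ 1 ≤ x ∧ x ≤ m := by
  rw [h.mem_iff]
  simp only [List.mem_map, List.mem_range]
  constructor
  · rintro ⟨y, hy, rfl⟩; omega
  · intro hx; exact ⟨x - 1, by omega, by omega⟩

lemma countP_range_le (m x : ℕ) :
    ((List.range m).map (· + 1)).countP (fun z => z ≤ x) = min x m := by
  induction m with
  | zero => simp
  | succ m ih =>
    rw [List.range_succ, List.map_append, List.countP_append, ih]
    simp only [List.map_cons, List.map_nil, List.countP_cons, List.countP_nil]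
    by_cases h : m + 1 ≤ x <;> simp [h] <;> omega

lemma isPermList_rank {m : ℕ} {l : List ℕ} (h : IsPermList m l) {x : ℕ} (hx : x ≤ m) :
    l.countP (fun z => z ≤ x) = x := by
  rw [h.countP_eq, countP_range_le]; omega

lemma isPermList_stackSort {m : ℕ} {l : List ℕ} (h : IsPermList m l) :
    IsPermList m (stackSort l) := (stackSort_perm l).trans h


-- MinMax helpers
lemma get_app_left (u v : List ℕ) (m : Fin (u ++ v).length) (h : m.val < u.length) :
    (u ++ v).get m = u.get ⟨m.val, h⟩ := by
  simp only [List.get_eq_getElem]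
  exact List.getElem_append_left h

lemma get_app_right (u v : List ℕ) (m : Fin (u ++ v).length) (h : u.length ≤ m.val) :
    (u ++ v).get m = v.get ⟨m.val - u.length, by have := m.isLt; simp at this; omega⟩ := by
  simp only [List.get_eq_getElem]
  exact List.getElem_append_right h

lemma minMax_prefix {u v : List ℕ} (h : MinMax (u ++ v)) : MinMax u := by
  intro i j k hij hjk
  have hlt : ∀ m : Fin u.length, m.val < (u ++ v).length := by
    intro m; have := m.isLt; simp; omega
  have e : ∀ m : Fin u.length, (u ++ v).get ⟨m.val, hlt m⟩ = u.get m := by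
    intro m; exact get_app_left u v _ m.isLt
  have := h ⟨i.val, hlt i⟩ ⟨j.val, hlt j⟩ ⟨k.val, hlt k⟩ hij hjk
  rwa [e i, e j, e k] at this

lemma minMax_append_max {w : List ℕ} {n : ℕ} (h : MinMax w) (hw : ∀ x ∈ w, x < n) :
    MinMax (w ++ [n]) := by
  intro i j k hij hjk
  have hk := k.isLt
  simp only [List.length_append, List.length_cons, List.length_nil] at hk
  by_cases hkw : k.val < w.length
  · have hiw : i.val < w.length := by have : i < k := lt_trans hij hjk; omega
    have hjw : j.val < w.length := by omega
    have := h ⟨i.val, hiw⟩ ⟨j.val, hjw⟩ ⟨k.val, hkw⟩ hij hjk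
    rwa [get_app_left w [n] i hiw, get_app_left w [n] j hjw, get_app_left w [n] k hkw]
  · have hkv : w.length ≤ k.val := by omega
    rw [get_app_right w [n] k hkv]
    have hiw : i.val < w.length := by have : i < k := lt_trans hij hjk; omega
    have hjw : j.val < w.length := by omega
    rw [get_app_left w [n] i hiw, get_app_left w [n] j hjw]
    right
    have egn : ∀ (hh : k.val - w.length < [n].length), ([n] : List ℕ).get ⟨k.val - w.length, hh⟩ = n := by
      intro hh
      have : k.val - w.length = 0 := by simp at hh; omega
      simp [this]
    rw [egn]
    exact ⟨hw _ (List.get_mem _ _), hw _ (List.get_mem _ _)⟩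

lemma crossF1 {u v : List ℕ} (h : MinMax (u ++ v)) (i : Fin u.length) (j k : Fin v.length)
    (hjk : j < k) :
    (v.get k < u.get i ∧ v.get k < v.get j) ∨ (u.get i < v.get k ∧ v.get j < v.get k) := by
  have hl : ∀ m : Fin v.length, u.length + m.val < (u ++ v).length := by
    intro m; have := m.isLt; simp only [List.length_append]; omega
  have hiu : i.val < (u ++ v).length := by
    have := i.isLt; simp only [List.length_append]; omega
  have e1 : (u ++ v).get ⟨i.val, hiu⟩ = u.get i := get_app_left u v _ i.isLt
  have e2 : ∀ m : Fin v.length, (u ++ v).get ⟨u.length + m.val, hl m⟩ = v.get m := by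
    intro m
    rw [get_app_right u v _ (Nat.le_add_right u.length m.val)]
    congr 1
    ext
    show u.length + m.val - u.length = m.val
    omega
  have hjk' : j.val < k.val := hjk
  have hi' := i.isLt
  have := h ⟨i.val, hiu⟩ ⟨u.length + j.val, hl j⟩ ⟨u.length + k.val, hl k⟩
    (by simp only [Fin.mk_lt_mk]; omega) (by simp only [Fin.mk_lt_mk]; omega)
  rwa [e1, e2 j, e2 k] at this

lemma crossF3 {u v : List ℕ} (h : MinMax (u ++ v)) (i j : Fin u.length) (k : Fin v.length)
    (hij : i < j) :
    (v.get k < u.get i ∧ v.get k < u.get j) ∨ (u.get i < v.get k ∧ u.get j < v.get k) := by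
  have hl : u.length + k.val < (u ++ v).length := by
    have := k.isLt; simp only [List.length_append]; omega
  have hiu : i.val < (u ++ v).length := by
    have := i.isLt; simp only [List.length_append]; omega
  have hju : j.val < (u ++ v).length := by
    have := j.isLt; simp only [List.length_append]; omega
  have e1 : (u ++ v).get ⟨i.val, hiu⟩ = u.get i := get_app_left u v _ i.isLt
  have e2 : (u ++ v).get ⟨j.val, hju⟩ = u.get j := get_app_left u v _ j.isLt
  have e3 : (u ++ v).get ⟨u.length + k.val, hl⟩ = v.get k := by
    rw [get_app_right u v _ (Nat.le_add_right u.length k.val)]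
    congr 1
    ext
    show u.length + k.val - u.length = k.val
    omega
  have hij' : i.val < j.val := hij
  have hj' := j.isLt
  have := h ⟨i.val, hiu⟩ ⟨j.val, hju⟩ ⟨u.length + k.val, hl⟩
    (by simp only [Fin.mk_lt_mk]; omega) (by simp only [Fin.mk_lt_mk]; omega)
  rwa [e1, e2, e3] at this

lemma minMax_head {w : List ℕ} (h : MinMax w) (h0 : 0 < w.length) (k j : Fin w.length)
    (hjk : j < k) :
    (w.get ⟨0, h0⟩ < w.get k → w.get j < w.get k) ∧
    (w.get k < w.get ⟨0, h0⟩ → w.get k < w.get j) := by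
  by_cases hj0 : j.val = 0
  · have : j = ⟨0, h0⟩ := by ext; exact hj0
    subst this
    exact ⟨fun hh => hh, fun hh => hh⟩
  · have h0j : (⟨0, h0⟩ : Fin w.length) < j := by simp [Fin.lt_def]; omega
    have := h ⟨0, h0⟩ j k h0j hjk
    constructor
    · intro hlt
      rcases this with ⟨h1, _⟩ | ⟨_, h2⟩
      · omega
      · exact h2
    · intro hlt
      rcases this with ⟨_, h2⟩ | ⟨h1, _⟩
      · exact h2
      · omega

lemma minMax_of_orderIso {w w' : List ℕ} (h : OrderIsoList w w') (hm : MinMax w') :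
    MinMax w := by
  rcases h with ⟨hlen, hiso⟩
  intro i j k hij hjk
  have := hm (Fin.cast hlen i) (Fin.cast hlen j) (Fin.cast hlen k) hij hjk
  rcases this with ⟨h1, h2⟩ | ⟨h1, h2⟩
  · exact Or.inl ⟨(hiso k i).2 h1, (hiso k j).2 h2⟩
  · exact Or.inr ⟨(hiso i k).2 h1, (hiso j k).2 h2⟩


lemma minMax_glue {u v : List ℕ} {lo hi : ℕ}
    (hMu : MinMax u)
    (hu : ∀ x ∈ u, lo < x ∧ x ≤ hi)
    (hv : ∀ x ∈ v, x ≤ lo ∨ hi < x)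
    (hcross : ∀ (jj kk : Fin v.length), jj < kk →
      (v.get kk ≤ lo → v.get kk < v.get jj) ∧ (hi < v.get kk → v.get jj < v.get kk)) :
    MinMax (u ++ v) := by
  intro i j k hij hjk
  have hik : i < k := lt_trans hij hjk
  have hkl := k.isLt
  simp only [List.length_append] at hkl
  have hij' : i.val < j.val := hij
  have hjk' : j.val < k.val := hjk
  by_cases hk : k.val < u.length
  · -- all three in u
    have hi : i.val < u.length := by omega
    have hj : j.val < u.length := by omega
    have := hMu ⟨i.val, hi⟩ ⟨j.val, hj⟩ ⟨k.val, hk⟩ (by exact hij') (by exact hjk')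
    rwa [get_app_left u v i hi, get_app_left u v j hj, get_app_left u v k hk]
  · have hk2 : u.length ≤ k.val := by omega
    have kk : Fin v.length := ⟨k.val - u.length, by omega⟩
    clear kk
    set kk : Fin v.length := (⟨k.val - u.length, by omega⟩ : Fin v.length) with hkk
    have ek : (u ++ v).get k = v.get kk := get_app_right u v k hk2
    rw [ek]
    have hmemk : v.get kk ∈ v := List.get_mem v kk
    have hvk := hv (v.get kk) hmemk
    by_cases hj : j.val < u.length
    · -- i, j in u, k in v
      have hi : i.val < u.length := by omega
      rw [get_app_left u v i hi, get_app_left u v j hj]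
      have hui := hu _ (List.get_mem u ⟨_, hi⟩)
      have huj := hu _ (List.get_mem u ⟨_, hj⟩)
      rcases hvk with h | h
      · left; constructor <;> omega
      · right; constructor <;> omega
    · -- j, k in v
      have hj2 : u.length ≤ j.val := by omega
      set jj : Fin v.length := (⟨j.val - u.length, by omega⟩ : Fin v.length) with hjj
      have ej : (u ++ v).get j = v.get jj := get_app_right u v j hj2
      rw [ej]
      have hjjkk : jj < kk := by
        rw [Fin.lt_def]
        show j.val - u.length < k.val - u.length
        omega
      have hcr := hcross jj kk hjjkk
      by_cases hi : i.val < u.length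
      · -- i in u
        rw [get_app_left u v i hi]
        have hui := hu _ (List.get_mem u ⟨_, hi⟩)
        rcases hvk with h | h
        · exact Or.inl ⟨by omega, hcr.1 h⟩
        · exact Or.inr ⟨by omega, hcr.2 h⟩
      · have hi2 : u.length ≤ i.val := by omega
        set ii : Fin v.length := (⟨i.val - u.length, by omega⟩ : Fin v.length) with hii
        have ei : (u ++ v).get i = v.get ii := get_app_right u v i hi2
        rw [ei]
        have hiikk : ii < kk := by
          rw [Fin.lt_def]
          show i.val - u.length < k.val - u.length
          omega
        have hcr2 := hcross ii kk hiikk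
        rcases hvk with h | h
        · exact Or.inl ⟨hcr2.1 h, hcr.1 h⟩
        · exact Or.inr ⟨hcr2.2 h, hcr.2 h⟩


lemma mem_one_range {n x : ℕ} : x ∈ (List.range n).map (· + 1) ↔ 1 ≤ x ∧ x ≤ n := by
  simp only [List.mem_map, List.mem_range]
  constructor
  · rintro ⟨y, hy, rfl⟩; omega
  · intro hx; exact ⟨x - 1, by omega, by omega⟩

lemma nodup_one_range (n : ℕ) : ((List.range n).map (· + 1)).Nodup :=
  (List.nodup_range (n := n)).map (fun x y hxy => by omega)

lemma witness_in_set
    (n a b c₀ sh : ℕ) (ℓ r : List ℕ) (g : ℕ → ℕ)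
    (hℓperm : IsPermList a ℓ) (hrperm : IsPermList b r)
    (hla : ℓ.length = a) (hrb : r.length = b)
    (ha1 : 1 ≤ a) (hb1 : 1 ≤ b) (hn : n = a + b + 1)
    (hMℓ : MinMax (stackSort ℓ)) (hMr : MinMax (stackSort r))
    (hsr_pos : 0 < (stackSort r).length)
    (hc0 : (stackSort r).get ⟨0, hsr_pos⟩ = c₀)
    (hshb : sh ≤ b)
    (hG2 : ∀ y z : ℕ, 1 ≤ y → y ≤ b → 1 ≤ z → z ≤ b → (y < z ↔ g y < g z))
    (hC1 : ∀ y, 1 ≤ y → y ≤ b → ((sh < g y → sh + a < g y) ∧ 1 ≤ g y ∧ g y ≤ b + a))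
    (hC2 : ∀ y, 1 ≤ y → y ≤ b → y < c₀ → g y ≤ sh)
    (hC3 : ∀ y, 1 ≤ y → y ≤ b → c₀ < y → sh + a < g y)
    (hC4 : ∀ x, 1 ≤ x → x ≤ a + b → ¬(sh + 1 ≤ x ∧ x ≤ sh + a) → ∃ y, 1 ≤ y ∧ y ≤ b ∧ g y = x) :
    IsPermList n (ℓ.map (· + sh) ++ n :: r.map g) ∧
    OrderIsoList (ℓ.map (· + sh)) ℓ ∧ OrderIsoList (r.map g) r ∧
    AvoidsPat (stackSort (ℓ.map (· + sh) ++ n :: r.map g)) [1, 3, 2] ∧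
    AvoidsPat (stackSort (ℓ.map (· + sh) ++ n :: r.map g)) [3, 1, 2] := by
  have hmemℓ := isPermList_mem hℓperm
  have hmemr := isPermList_mem hrperm
  have hndℓ := isPermList_nodup hℓperm
  have hndr := isPermList_nodup hrperm
  have hshmono : ∀ x ∈ ℓ, ∀ y ∈ ℓ, (x < y ↔ x + sh < y + sh) := by
    intro x _ y _; omega
  have hgmono : ∀ x ∈ r, ∀ y ∈ r, (x < y ↔ g x < g y) := by
    intro x hx y hy
    have hxb := (hmemr x).1 hx
    have hyb := (hmemr y).1 hy
    exact hG2 x y hxb.1 hxb.2 hyb.1 hyb.2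
  have hLiso : OrderIsoList (ℓ.map (· + sh)) ℓ := orderIsoList_map hshmono
  have hRiso : OrderIsoList (r.map g) r := orderIsoList_map hgmono
  have hmemL : ∀ x, x ∈ ℓ.map (· + sh) ↔ (sh + 1 ≤ x ∧ x ≤ sh + a) := by
    intro x
    simp only [List.mem_map]
    constructor
    · rintro ⟨y, hy, rfl⟩; have := (hmemℓ y).1 hy; omega
    · intro hx; exact ⟨x - sh, (hmemℓ _).2 ⟨by omega, by omega⟩, by omega⟩
  have hmemR : ∀ x, x ∈ r.map g → ∃ y, 1 ≤ y ∧ y ≤ b ∧ g y = x := by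
    intro x hx
    rcases List.mem_map.1 hx with ⟨y, hy, rfl⟩
    have := (hmemr y).1 hy
    exact ⟨y, this.1, this.2, rfl⟩
  have hmemR2 : ∀ x, 1 ≤ x → x ≤ a + b → ¬(sh + 1 ≤ x ∧ x ≤ sh + a) → x ∈ r.map g := by
    intro x h1 h2 h3
    rcases hC4 x h1 h2 h3 with ⟨y, hy1, hy2, hgy⟩
    exact List.mem_map.2 ⟨y, (hmemr y).2 ⟨hy1, hy2⟩, hgy⟩
  have hndL : (ℓ.map (· + sh)).Nodup :=
    List.Nodup.map_on (fun x _ y _ h => by omega) hndℓ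
  have hndR : (r.map g).Nodup := by
    refine List.Nodup.map_on (fun x hx y hy h => ?_) hndr
    rcases lt_trichotomy x y with hc | hc | hc
    · exact absurd h (Nat.ne_of_lt ((hgmono x hx y hy).1 hc))
    · exact hc
    · exact absurd h.symm (Nat.ne_of_lt ((hgmono y hy x hx).1 hc))
  have hdisj : (ℓ.map (· + sh)).Disjoint (n :: r.map g) := by
    intro x hxL hxR
    have hb1' := (hmemL x).1 hxL
    rcases List.mem_cons.1 hxR with rfl | hxR
    · omega
    · rcases hmemR x hxR with ⟨y, hy1, hy2, rfl⟩
      have := (hC1 y hy1 hy2).1 (by omega)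
      omega
  have hndp : (ℓ.map (· + sh) ++ n :: r.map g).Nodup := by
    rw [List.nodup_append]
    refine ⟨hndL, ?_, fun x hx y hy hxy => hdisj hx (hxy ▸ hy)⟩
    rw [List.nodup_cons]
    refine ⟨fun hc => ?_, hndR⟩
    rcases hmemR n hc with ⟨y, hy1, hy2, hgy⟩
    have := (hC1 y hy1 hy2).2.2
    omega
  have hperm : IsPermList n (ℓ.map (· + sh) ++ n :: r.map g) := by
    rw [IsPermList, List.perm_ext_iff_of_nodup hndp (nodup_one_range n)]
    intro x
    rw [mem_one_range, List.mem_append, List.mem_cons]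
    constructor
    · rintro (hx | rfl | hx)
      · have := (hmemL x).1 hx; omega
      · omega
      · rcases hmemR x hx with ⟨y, hy1, hy2, rfl⟩
        have := (hC1 y hy1 hy2).2
        omega
    · rintro ⟨h1, h2⟩
      by_cases hx : x = n
      · exact Or.inr (Or.inl hx)
      · by_cases hmid : sh + 1 ≤ x ∧ x ≤ sh + a
        · exact Or.inl ((hmemL x).2 hmid)
        · exact Or.inr (Or.inr (hmemR2 x h1 (by omega) hmid))
  -- stack sort structure
  have hbndL : ∀ x ∈ ℓ.map (· + sh), x < n := fun x hx => by
    have := (hmemL x).1 hx; omega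
  have hbndR : ∀ x ∈ r.map g, x < n := fun x hx => by
    rcases hmemR x hx with ⟨y, hy1, hy2, rfl⟩
    have := (hC1 y hy1 hy2).2.2
    omega
  have hsplit := stackSort_split (n := n) hbndL hbndR
  have hsL : stackSort (ℓ.map (· + sh)) = (stackSort ℓ).map (· + sh) := stackSort_map hshmono
  have hsR : stackSort (r.map g) = (stackSort r).map g := stackSort_map hgmono
  have hndsr : (stackSort r).Nodup := (stackSort_perm r).nodup_iff.2 hndr
  have hmemsr : ∀ x ∈ stackSort r, 1 ≤ x ∧ x ≤ b := fun x hx =>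
    (hmemr x).1 ((stackSort_perm r).subset hx)
  have hmemsl : ∀ x ∈ stackSort ℓ, 1 ≤ x ∧ x ≤ a := fun x hx =>
    (hmemℓ x).1 ((stackSort_perm ℓ).subset hx)
  -- the glued MinMax
  have hMM : MinMax ((stackSort ℓ).map (· + sh) ++ (stackSort r).map g) := by
    apply minMax_glue (lo := sh) (hi := sh + a)
    · -- MinMax of mapped left part
      refine minMax_of_orderIso (orderIsoList_map ?_) hMℓ
      intro x _ y _; omega
    · intro x hx
      rcases List.mem_map.1 hx with ⟨y, hy, rfl⟩
      have := hmemsl y hy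
      omega
    · intro x hx
      rcases List.mem_map.1 hx with ⟨y, hy, rfl⟩
      have hyb := hmemsr y hy
      by_cases hgy : g y ≤ sh
      · exact Or.inl hgy
      · exact Or.inr ((hC1 y hyb.1 hyb.2).1 (by omega))
    · intro jj kk hjjkk
      have hjk' : jj.val < kk.val := hjjkk
      have hkl : kk.val < (stackSort r).length := by
        have := kk.isLt
        simpa using this
      have hjl : jj.val < (stackSort r).length := by omega
      set kkr : Fin (stackSort r).length := ⟨kk.val, hkl⟩ with hkkr
      set jjr : Fin (stackSort r).length := ⟨jj.val, hjl⟩ with hjjr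
      have egetk : ((stackSort r).map g).get kk = g ((stackSort r).get kkr) := List.get_map g
      have egetj : ((stackSort r).map g).get jj = g ((stackSort r).get jjr) := List.get_map g
      set yk := (stackSort r).get kkr with hyk
      set yj := (stackSort r).get jjr with hyj
      have hykb := hmemsr yk (List.get_mem _ _)
      have hyjb := hmemsr yj (List.get_mem _ _)
      have hykne : yk ≠ c₀ := by
        intro hc
        rw [← hc0] at hc
        have := hndsr.get_inj_iff.1 hc
        rw [hkkr] at this
        have : kk.val = 0 := by
          have := congrArg Fin.val this
          simpa using this
        omega
      have hjjkkr : jjr < kkr := by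
        rw [Fin.lt_def]
        show jj.val < kk.val
        omega
      have hhead := minMax_head hMr hsr_pos kkr jjr hjjkkr
      rw [egetk, egetj]
      constructor
      · intro hle
        have h1 : ¬ c₀ < yk := fun hgt => by
          have := hC3 yk hykb.1 hykb.2 hgt
          omega
        have h2 : yk < c₀ := by omega
        have h3 : yk < yj := hhead.2 (by rw [hc0]; exact h2)
        exact (hG2 yk yj hykb.1 hykb.2 hyjb.1 hyjb.2).1 h3
      · intro hgt
        have h1 : ¬ yk < c₀ := fun hlt => by
          have := hC2 yk hykb.1 hykb.2 hlt
          omega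
        have h2 : c₀ < yk := by omega
        have h3 : yj < yk := hhead.1 (by rw [hc0]; exact h2)
        exact (hG2 yj yk hyjb.1 hyjb.2 hykb.1 hykb.2).1 h3
  have hMM2 : MinMax (((stackSort ℓ).map (· + sh) ++ (stackSort r).map g) ++ [n]) := by
    apply minMax_append_max hMM
    intro x hx
    rcases List.mem_append.1 hx with hx | hx
    · rcases List.mem_map.1 hx with ⟨y, hy, rfl⟩
      have := hmemsl y hy
      omega
    · rcases List.mem_map.1 hx with ⟨y, hy, rfl⟩
      have hyb := hmemsr y hy
      have := (hC1 y hyb.1 hyb.2).2.2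
      omega
  have hss : stackSort (ℓ.map (· + sh) ++ n :: r.map g) =
      ((stackSort ℓ).map (· + sh) ++ (stackSort r).map g) ++ [n] := by
    rw [hsplit, hsL, hsR]
  have hndss : (stackSort (ℓ.map (· + sh) ++ n :: r.map g)).Nodup :=
    (stackSort_perm _).nodup_iff.2 hndp
  have hav := (avoids_iff_minMax hndss).2 (by rw [hss]; exact hMM2)
  exact ⟨hperm, hLiso, hRiso, hav.1, hav.2⟩


def gLow (c₀ a : ℕ) : ℕ → ℕ := fun y => if y ≤ c₀ then y else y + a
def gHigh (c₀ a : ℕ) : ℕ → ℕ := fun y => if y < c₀ then y else y + a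

lemma countP_eq_c {l : List ℕ} (hnd : l.Nodup) {c : ℕ} (hc : c ∈ l) :
    l.countP (fun z => z == c) = 1 := by
  induction l with
  | nil => simp at hc
  | cons z T ih =>
    rcases List.nodup_cons.1 hnd with ⟨hzT, hndT⟩
    rw [List.countP_cons]
    rcases List.mem_cons.1 hc with heq | hcT
    · subst heq
      simp only [beq_self_eq_true, if_true]
      have : T.countP (fun z' => z' == c) = 0 := by
        rw [List.countP_eq_zero]
        intro x hx
        simp only [beq_iff_eq]
        intro hxz
        exact hzT (hxz ▸ hx)
      omega
    · have hzc : (z == c) = false := by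
        simp only [beq_eq_false_iff_ne, ne_eq]
        rintro rfl
        exact hzT hcT
      rw [ih hndT hcT, hzc]
      simp

lemma member_eq
    (n a b c₀ : ℕ) (ℓ r : List ℕ)
    (hℓperm : IsPermList a ℓ) (hrperm : IsPermList b r)
    (hla : ℓ.length = a) (hrb : r.length = b)
    (ha1 : 1 ≤ a) (hb1 : 1 ≤ b) (hn : n = a + b + 1)
    (hsr_pos : 0 < (stackSort r).length)
    (hc0 : (stackSort r).get ⟨0, hsr_pos⟩ = c₀)
    (p L R : List ℕ)
    (hperm : IsPermList n p) (hpe : p = L ++ n :: R)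
    (hLiso : OrderIsoList L ℓ) (hRiso : OrderIsoList R r)
    (hav1 : AvoidsPat (stackSort p) [1, 3, 2]) (hav2 : AvoidsPat (stackSort p) [3, 1, 2]) :
    p = ℓ.map (· + c₀) ++ n :: r.map (gLow c₀ a) ∨
    p = ℓ.map (· + (c₀ - 1)) ++ n :: r.map (gHigh c₀ a) := by
  have hmemℓ := isPermList_mem hℓperm
  have hmemr := isPermList_mem hrperm
  have hndℓ := isPermList_nodup hℓperm
  have hndr := isPermList_nodup hrperm
  have hndp0 := isPermList_nodup hperm
  have hndp := hndp0
  rw [hpe] at hndp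
  rcases List.nodup_append.1 hndp with ⟨hndL, hndnR, hdisj⟩
  rcases List.nodup_cons.1 hndnR with ⟨hnR, hndR⟩
  obtain ⟨hLlen, hLi⟩ := hLiso
  obtain ⟨hRlen, hRi⟩ := hRiso
  have hLa : L.length = a := by rw [hLlen, hla]
  have hRb : R.length = b := by rw [hRlen, hrb]
  have hmemp := isPermList_mem hperm
  have hmemL : ∀ x ∈ L, 1 ≤ x ∧ x < n := by
    intro x hx
    have hxp : x ∈ p := by rw [hpe]; exact List.mem_append_left _ hx
    have := (hmemp x).1 hxp
    have hxn : x ≠ n := by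
      rintro rfl
      exact hdisj _ hx _ List.mem_cons_self rfl
    constructor
    · omega
    · omega
  have hmemR : ∀ x ∈ R, 1 ≤ x ∧ x < n := by
    intro x hx
    have hxp : x ∈ p := by
      rw [hpe]; exact List.mem_append_right _ (List.mem_cons_of_mem _ hx)
    have := (hmemp x).1 hxp
    have hxn : x ≠ n := by
      rintro rfl
      exact hnR hx
    constructor
    · omega
    · omega
  have hglob : ∀ x, x < n → L.countP (fun z => z ≤ x) + R.countP (fun z => z ≤ x) = x := by
    intro x hx
    have h := isPermList_rank hperm (le_of_lt hx)
    rw [hpe, List.countP_append, List.countP_cons] at h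
    have hnle : (decide (n ≤ x)) = false := by simp; omega
    rw [hnle] at h
    simpa using h
  have hsplit : stackSort p = stackSort L ++ stackSort R ++ [n] := by
    rw [hpe]
    exact stackSort_split (fun x hx => (hmemL x hx).2) (fun x hx => (hmemR x hx).2)
  have hndsp : (stackSort p).Nodup := (stackSort_perm p).nodup_iff.2 hndp0
  have hM : MinMax (stackSort L ++ stackSort R ++ [n]) := by
    rw [← hsplit]
    exact (avoids_iff_minMax hndsp).1 ⟨hav1, hav2⟩
  have hM2 : MinMax (stackSort L ++ stackSort R) := minMax_prefix hM
  have hcpos : 0 < (stackSort R).length := by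
    rw [(stackSort_perm R).length_eq, hRb]
    omega
  have hsLpos : 0 < (stackSort L).length := by
    rw [(stackSort_perm L).length_eq, hLa]
    omega
  set c := (stackSort R).get ⟨0, hcpos⟩ with hc
  have hcmem : c ∈ R := (stackSort_perm R).subset (List.get_mem _ _)
  have hsriso := orderIsoList_stackSort ⟨hRlen, hRi⟩ hndr
  obtain ⟨hsl, hsiso⟩ := hsriso
  have hsrperm : IsPermList b (stackSort r) := isPermList_stackSort hrperm
  have hc0mem : c₀ ∈ stackSort r := hc0 ▸ List.get_mem _ _
  have hc0b : 1 ≤ c₀ ∧ c₀ ≤ b := (isPermList_mem hsrperm c₀).1 hc0mem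
  have hcrank : R.countP (fun z => z ≤ c) = c₀ := by
    have h1 : R.countP (fun z => z ≤ c) = (stackSort R).countP (fun z => z ≤ c) :=
      ((stackSort_perm R).countP_eq _).symm
    have hcast : (stackSort r).get (Fin.cast hsl ⟨0, hcpos⟩) = c₀ := hc0
    have h2 : (stackSort R).countP (fun z => z ≤ c) =
        (stackSort r).countP (fun z => z ≤ c₀) := by
      apply countP_congr_iso hsl
      intro i
      apply decide_eq_decide.2
      rw [← not_lt, ← not_lt]
      apply not_congr
      rw [← hcast, hc]
      exact hsiso ⟨0, hcpos⟩ i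
    rw [h1, h2, isPermList_rank hsrperm hc0b.2]
  have hLrank : ∀ i : Fin L.length, ∀ hi : i.val < ℓ.length,
      L.countP (fun z => z ≤ L.get i) = ℓ.get ⟨i.val, hi⟩ := by
    intro i hi
    have h2 : L.countP (fun z => z ≤ L.get i) = ℓ.countP (fun z => z ≤ ℓ.get ⟨i.val, hi⟩) := by
      apply countP_congr_iso hLlen
      intro j
      apply decide_eq_decide.2
      rw [← not_lt, ← not_lt]
      exact not_congr (hLi i j)
    have hb' : ℓ.get ⟨i.val, hi⟩ ≤ a := ((hmemℓ _).1 (List.get_mem _ _)).2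
    rw [h2, isPermList_rank hℓperm hb']
  have hRrank : ∀ i : Fin R.length, ∀ hi : i.val < r.length,
      R.countP (fun z => z ≤ R.get i) = r.get ⟨i.val, hi⟩ := by
    intro i hi
    have h2 : R.countP (fun z => z ≤ R.get i) = r.countP (fun z => z ≤ r.get ⟨i.val, hi⟩) := by
      apply countP_congr_iso hRlen
      intro j
      apply decide_eq_decide.2
      rw [← not_lt, ← not_lt]
      exact not_congr (hRi i j)
    have hb' : r.get ⟨i.val, hi⟩ ≤ b := ((hmemr _).1 (List.get_mem _ _)).2
    rw [h2, isPermList_rank hrperm hb']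
  have hF1 : ∀ x ∈ R, x < c → ∀ y ∈ L, x < y := by
    intro x hx hxc y hy
    obtain ⟨kx, hkx⟩ := List.get_of_mem ((stackSort_perm R).mem_iff.2 hx)
    obtain ⟨iy, hiy⟩ := List.get_of_mem ((stackSort_perm L).mem_iff.2 hy)
    have hkx0 : 0 < kx.val := by
      rcases Nat.eq_zero_or_pos kx.val with h0 | h0
      · exfalso
        have : kx = ⟨0, hcpos⟩ := by ext; exact h0
        rw [this] at hkx
        rw [← hc] at hkx
        omega
      · exact h0
    have := crossF1 hM2 iy ⟨0, hcpos⟩ kx (by rw [Fin.lt_def]; exact hkx0)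
    rw [hkx, hiy, ← hc] at this
    rcases this with ⟨h1, h2⟩ | ⟨h1, h2⟩ <;> omega
  have hF2 : ∀ x ∈ R, c < x → ∀ y ∈ L, y < x := by
    intro x hx hxc y hy
    obtain ⟨kx, hkx⟩ := List.get_of_mem ((stackSort_perm R).mem_iff.2 hx)
    obtain ⟨iy, hiy⟩ := List.get_of_mem ((stackSort_perm L).mem_iff.2 hy)
    have hkx0 : 0 < kx.val := by
      rcases Nat.eq_zero_or_pos kx.val with h0 | h0
      · exfalso
        have : kx = ⟨0, hcpos⟩ := by ext; exact h0
        rw [this] at hkx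
        rw [← hc] at hkx
        omega
      · exact h0
    have := crossF1 hM2 iy ⟨0, hcpos⟩ kx (by rw [Fin.lt_def]; exact hkx0)
    rw [hkx, hiy, ← hc] at this
    rcases this with ⟨h1, h2⟩ | ⟨h1, h2⟩ <;> omega
  have hF3 : (∀ y ∈ L, c < y) ∨ (∀ y ∈ L, y < c) := by
    set y₀ := (stackSort L).get ⟨0, hsLpos⟩ with hy₀
    have hy₀L : y₀ ∈ L := (stackSort_perm L).subset (List.get_mem _ _)
    have hne : c ≠ y₀ := by
      intro h
      exact hdisj _ hy₀L _ (List.mem_cons_of_mem _ hcmem) h.symm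
    have hside : ∀ y ∈ L, (c < y₀ → c < y) ∧ (y₀ < c → y < c) := by
      intro y hy
      obtain ⟨iy, hiy⟩ := List.get_of_mem ((stackSort_perm L).mem_iff.2 hy)
      rcases Nat.eq_zero_or_pos iy.val with h0 | h0
      · have : iy = ⟨0, hsLpos⟩ := by ext; exact h0
        rw [this] at hiy
        rw [← hy₀] at hiy
        subst hiy
        exact ⟨fun h => h, fun h => h⟩
      · have := crossF3 hM2 ⟨0, hsLpos⟩ iy ⟨0, hcpos⟩ (by rw [Fin.lt_def]; exact h0)
        rw [hiy, ← hc, ← hy₀] at this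
        rcases this with ⟨h1, h2⟩ | ⟨h1, h2⟩ <;> exact ⟨fun _ => by omega, fun _ => by omega⟩
    rcases lt_or_gt_of_ne hne with hlt | hgt
    · exact Or.inl (fun y hy => (hside y hy).1 hlt)
    · exact Or.inr (fun y hy => (hside y hy).2 hgt)
  rcases hF3 with hAc | hAc
  · -- case 1: all of L above c; shift is c₀
    left
    have hLeq : L = ℓ.map (· + c₀) := by
      apply List.ext_get (by rw [List.length_map, hLlen])
      intro i h1 h2
      have hi' : i < ℓ.length := by simpa using h2
      have hmap : (ℓ.map (· + c₀)).get ⟨i, h2⟩ = ℓ.get ⟨i, hi'⟩ + c₀ := List.get_map _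
      rw [hmap]
      set x := L.get ⟨i, h1⟩ with hx
      have hxL : x ∈ L := List.get_mem _ _
      have hxb := hmemL x hxL
      have hCR : R.countP (fun z => z ≤ x) = c₀ := by
        rw [← hcrank]
        apply List.countP_congr
        intro z hz
        simp only [decide_eq_true_eq]
        constructor
        · intro hzx
          by_contra hzc
          have := hF2 z hz (by omega) x hxL
          omega
        · intro hzc
          rcases Nat.lt_or_ge z c with hlt | hge
          · have := hF1 z hz hlt x hxL
            omega
          · have : z = c := by omega
            subst this
            have := hAc x hxL
            omega
      have hCL : L.countP (fun z => z ≤ x) = ℓ.get ⟨i, hi'⟩ := hLrank ⟨i, h1⟩ hi'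
      have hg := hglob x hxb.2
      omega
    have hReq : R = r.map (gLow c₀ a) := by
      apply List.ext_get (by rw [List.length_map, hRlen])
      intro i h1 h2
      have hi' : i < r.length := by simpa using h2
      have hmap : (r.map (gLow c₀ a)).get ⟨i, h2⟩ = gLow c₀ a (r.get ⟨i, hi'⟩) :=
        List.get_map _
      rw [hmap]
      set x := R.get ⟨i, h1⟩ with hx
      set ri := r.get ⟨i, hi'⟩ with hri
      have hxR : x ∈ R := List.get_mem _ _
      have hxb := hmemR x hxR
      have hCR : R.countP (fun z => z ≤ x) = ri := hRrank ⟨i, h1⟩ hi'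
      have hg := hglob x hxb.2
      by_cases hxc : x ≤ c
      · have hCL : L.countP (fun z => z ≤ x) = 0 := by
          rw [List.countP_eq_zero]
          intro y hy
          simp only [decide_eq_true_eq]
          have := hAc y hy
          omega
        have hxri : x = ri := by omega
        have hrib : ri ≤ c₀ := by
          have := countP_le_mono (l := R) hxc
          omega
        rw [gLow]
        simp only [hrib, if_true]
        omega
      · have hCL : L.countP (fun z => z ≤ x) = L.length := by
          rw [List.countP_eq_length]
          intro y hy
          simp only [decide_eq_true_eq]
          have := hF2 x hxR (by omega) y hy
          omega
        rw [hLa] at hCL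
        have hrib : c₀ < ri := by
          have := countP_le_strict (l := R) hxR (show c < x by omega)
          omega
        rw [gLow]
        simp only [show ¬ (ri ≤ c₀) by omega, if_false]
        omega
    rw [hpe, hLeq, hReq]
  · -- case 2: all of L below c; shift is c₀ - 1
    right
    have hcrank2 : R.countP (fun z => z < c) = c₀ - 1 := by
      have hsplit2 := countP_split R (fun z => z ≤ c) (fun z => z < c)
        (fun z _ hz => by simp at hz ⊢; omega)
      have heqc : R.countP (fun z => (z ≤ c) && !(z < c)) = 1 := by
        rw [← countP_eq_c hndR hcmem]
        apply List.countP_congr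
        intro z hz
        simp only [Bool.and_eq_true, Bool.not_eq_true', decide_eq_true_eq,
          decide_eq_false_iff_not, beq_iff_eq]
        omega
      rw [heqc] at hsplit2
      rw [hcrank] at hsplit2
      omega
    have hLeq : L = ℓ.map (· + (c₀ - 1)) := by
      apply List.ext_get (by rw [List.length_map, hLlen])
      intro i h1 h2
      have hi' : i < ℓ.length := by simpa using h2
      have hmap : (ℓ.map (· + (c₀ - 1))).get ⟨i, h2⟩ = ℓ.get ⟨i, hi'⟩ + (c₀ - 1) :=
        List.get_map _
      rw [hmap]
      set x := L.get ⟨i, h1⟩ with hx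
      have hxL : x ∈ L := List.get_mem _ _
      have hxb := hmemL x hxL
      have hCR : R.countP (fun z => z ≤ x) = c₀ - 1 := by
        rw [← hcrank2]
        apply List.countP_congr
        intro z hz
        simp only [decide_eq_true_eq]
        constructor
        · intro hzx
          have := hAc x hxL
          omega
        · intro hzc
          have := hF1 z hz hzc x hxL
          omega
      have hCL : L.countP (fun z => z ≤ x) = ℓ.get ⟨i, hi'⟩ := hLrank ⟨i, h1⟩ hi'
      have hg := hglob x hxb.2
      omega
    have hReq : R = r.map (gHigh c₀ a) := by
      apply List.ext_get (by rw [List.length_map, hRlen])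
      intro i h1 h2
      have hi' : i < r.length := by simpa using h2
      have hmap : (r.map (gHigh c₀ a)).get ⟨i, h2⟩ = gHigh c₀ a (r.get ⟨i, hi'⟩) :=
        List.get_map _
      rw [hmap]
      set x := R.get ⟨i, h1⟩ with hx
      set ri := r.get ⟨i, hi'⟩ with hri
      have hxR : x ∈ R := List.get_mem _ _
      have hxb := hmemR x hxR
      have hCR : R.countP (fun z => z ≤ x) = ri := hRrank ⟨i, h1⟩ hi'
      have hg := hglob x hxb.2
      by_cases hxc : x < c
      · have hCL : L.countP (fun z => z ≤ x) = 0 := by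
          rw [List.countP_eq_zero]
          intro y hy
          simp only [decide_eq_true_eq]
          have := hF1 x hxR hxc y hy
          omega
        have hxri : x = ri := by omega
        have hrib : ri < c₀ := by
          have := countP_le_strict (l := R) hcmem hxc
          omega
        rw [gHigh]
        simp only [hrib, if_true]
        omega
      · have hCL : L.countP (fun z => z ≤ x) = L.length := by
          rw [List.countP_eq_length]
          intro y hy
          simp only [decide_eq_true_eq]
          have := hAc y hy
          omega
        rw [hLa] at hCL
        have hrib : ¬ ri < c₀ := by
          have := countP_le_mono (l := R) (show c ≤ x by omega)
          omega
        rw [gHigh]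
        simp only [hrib, if_false]
        omega
    rw [hpe, hLeq, hReq]


end Aux

/-- let `n ≥ 3` and let `(ℓ, r)` be an ordered pair of nonempty
permutations with `|ℓ| + |r| = n - 1` such that `s(ℓ)` and `s(r)` avoid `132` and
`312`. Then there are exactly two permutations `p` of length `n` of the form
`p = L n R` with `L` order-isomorphic to `ℓ`, `R` order-isomorphic to `r`, and
`s(p)` avoiding both `132` and `312`. -/
theorem two_extensions_av132_312 (n : ℕ) (hn : 3 ≤ n) (ℓ r : List ℕ)
    (hℓperm : IsPermList ℓ.length ℓ) (hrperm : IsPermList r.length r)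
    (hℓ : ℓ ≠ []) (hr : r ≠ []) (hlen : ℓ.length + r.length = n - 1)
    (hℓav : AvoidsPat (stackSort ℓ) [1, 3, 2] ∧ AvoidsPat (stackSort ℓ) [3, 1, 2])
    (hrav : AvoidsPat (stackSort r) [1, 3, 2] ∧ AvoidsPat (stackSort r) [3, 1, 2]) :
    Nat.card {p : List ℕ // IsPermList n p ∧
        ∃ L R : List ℕ, p = L ++ n :: R ∧ OrderIsoList L ℓ ∧ OrderIsoList R r ∧
          AvoidsPat (stackSort p) [1, 3, 2] ∧ AvoidsPat (stackSort p) [3, 1, 2]} = 2 := by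
  have ha1 : 1 ≤ ℓ.length := List.length_pos_iff.2 hℓ
  have hb1 : 1 ≤ r.length := List.length_pos_iff.2 hr
  have hn' : n = ℓ.length + r.length + 1 := by omega
  have hndr := isPermList_nodup hrperm
  have hndℓ := isPermList_nodup hℓperm
  have hsr_pos : 0 < (stackSort r).length := by
    rw [(stackSort_perm r).length_eq]; omega
  set c₀ := (stackSort r).get ⟨0, hsr_pos⟩ with hc0def
  have hc0 : (stackSort r).get ⟨0, hsr_pos⟩ = c₀ := rfl
  have hsrperm := isPermList_stackSort hrperm
  have hc0b : 1 ≤ c₀ ∧ c₀ ≤ r.length := (isPermList_mem hsrperm c₀).1 (List.get_mem _ _)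
  have hMℓ : MinMax (stackSort ℓ) :=
    (avoids_iff_minMax ((stackSort_perm ℓ).nodup_iff.2 hndℓ)).1 hℓav
  have hMr : MinMax (stackSort r) :=
    (avoids_iff_minMax ((stackSort_perm r).nodup_iff.2 hndr)).1 hrav
  set a := ℓ.length with hadef
  set b := r.length with hbdef
  -- conditions for the low witness
  have hG2a : ∀ y z : ℕ, 1 ≤ y → y ≤ b → 1 ≤ z → z ≤ b →
      (y < z ↔ gLow c₀ a y < gLow c₀ a z) := by
    intro y z _ _ _ _
    unfold gLow
    split_ifs <;> omega
  have hC1a : ∀ y, 1 ≤ y → y ≤ b →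
      ((c₀ < gLow c₀ a y → c₀ + a < gLow c₀ a y) ∧ 1 ≤ gLow c₀ a y ∧ gLow c₀ a y ≤ b + a) := by
    intro y h1 h2
    unfold gLow
    split_ifs <;> omega
  have hC2a : ∀ y, 1 ≤ y → y ≤ b → y < c₀ → gLow c₀ a y ≤ c₀ := by
    intro y h1 h2 h3
    unfold gLow
    split_ifs <;> omega
  have hC3a : ∀ y, 1 ≤ y → y ≤ b → c₀ < y → c₀ + a < gLow c₀ a y := by
    intro y h1 h2 h3
    unfold gLow
    split_ifs <;> omega
  have hC4a : ∀ x, 1 ≤ x → x ≤ a + b → ¬(c₀ + 1 ≤ x ∧ x ≤ c₀ + a) →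
      ∃ y, 1 ≤ y ∧ y ≤ b ∧ gLow c₀ a y = x := by
    intro x h1 h2 h3
    by_cases hx : x ≤ c₀
    · exact ⟨x, h1, by omega, by unfold gLow; simp [hx]⟩
    · refine ⟨x - a, by omega, by omega, ?_⟩
      unfold gLow
      rw [if_neg (by omega)]
      omega
  -- conditions for the high witness
  have hG2b : ∀ y z : ℕ, 1 ≤ y → y ≤ b → 1 ≤ z → z ≤ b →
      (y < z ↔ gHigh c₀ a y < gHigh c₀ a z) := by
    intro y z _ _ _ _
    unfold gHigh
    split_ifs <;> omega
  have hC1b : ∀ y, 1 ≤ y → y ≤ b →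
      ((c₀ - 1 < gHigh c₀ a y → c₀ - 1 + a < gHigh c₀ a y) ∧
        1 ≤ gHigh c₀ a y ∧ gHigh c₀ a y ≤ b + a) := by
    intro y h1 h2
    unfold gHigh
    split_ifs <;> omega
  have hC2b : ∀ y, 1 ≤ y → y ≤ b → y < c₀ → gHigh c₀ a y ≤ c₀ - 1 := by
    intro y h1 h2 h3
    unfold gHigh
    split_ifs <;> omega
  have hC3b : ∀ y, 1 ≤ y → y ≤ b → c₀ < y → c₀ - 1 + a < gHigh c₀ a y := by
    intro y h1 h2 h3
    unfold gHigh
    split_ifs <;> omega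
  have hC4b : ∀ x, 1 ≤ x → x ≤ a + b → ¬(c₀ - 1 + 1 ≤ x ∧ x ≤ c₀ - 1 + a) →
      ∃ y, 1 ≤ y ∧ y ≤ b ∧ gHigh c₀ a y = x := by
    intro x h1 h2 h3
    by_cases hx : x < c₀
    · exact ⟨x, h1, by omega, by unfold gHigh; simp [hx]⟩
    · refine ⟨x - a, by omega, by omega, ?_⟩
      unfold gHigh
      rw [if_neg (by omega)]
      omega
  have hmem1 := witness_in_set n a b c₀ c₀ ℓ r (gLow c₀ a) hℓperm hrperm rfl rfl
    ha1 hb1 (by omega) hMℓ hMr hsr_pos hc0 hc0b.2 hG2a hC1a hC2a hC3a hC4a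
  have hmem2 := witness_in_set n a b c₀ (c₀ - 1) ℓ r (gHigh c₀ a) hℓperm hrperm rfl rfl
    ha1 hb1 (by omega) hMℓ hMr hsr_pos hc0 (by omega) hG2b hC1b hC2b hC3b hC4b
  set p1 := ℓ.map (· + c₀) ++ n :: r.map (gLow c₀ a) with hp1def
  set p2 := ℓ.map (· + (c₀ - 1)) ++ n :: r.map (gHigh c₀ a) with hp2def
  have hiff : ∀ p : List ℕ, (IsPermList n p ∧
      ∃ L R : List ℕ, p = L ++ n :: R ∧ OrderIsoList L ℓ ∧ OrderIsoList R r ∧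
        AvoidsPat (stackSort p) [1, 3, 2] ∧ AvoidsPat (stackSort p) [3, 1, 2]) ↔
      (p = p1 ∨ p = p2) := by
    intro p
    constructor
    · rintro ⟨hperm, L, R, hpe, hLiso, hRiso, hv1, hv2⟩
      exact member_eq n a b c₀ ℓ r hℓperm hrperm rfl rfl ha1 hb1 (by omega) hsr_pos hc0
        p L R hperm hpe hLiso hRiso hv1 hv2
    · rintro (rfl | rfl)
      · exact ⟨hmem1.1, _, _, rfl, hmem1.2.1, hmem1.2.2.1, hmem1.2.2.2.1, hmem1.2.2.2.2⟩
      · exact ⟨hmem2.1, _, _, rfl, hmem2.2.1, hmem2.2.2.1, hmem2.2.2.2.1, hmem2.2.2.2.2⟩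
  have hne : p1 ≠ p2 := by
    rcases hℓ' : ℓ with _ | ⟨x, t⟩
    · exact absurd hℓ' hℓ
    · intro h
      rw [hp1def, hp2def, hℓ'] at h
      simp only [List.map_cons, List.cons_append] at h
      have h2 := List.head_eq_of_cons_eq h
      omega
  have e1 : {p : List ℕ // IsPermList n p ∧
      ∃ L R : List ℕ, p = L ++ n :: R ∧ OrderIsoList L ℓ ∧ OrderIsoList R r ∧
        AvoidsPat (stackSort p) [1, 3, 2] ∧ AvoidsPat (stackSort p) [3, 1, 2]} ≃
      {p : List ℕ // p = p1 ∨ p = p2} := Equiv.subtypeEquivRight hiff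
  rw [Nat.card_congr e1]
  have e2 : {p : List ℕ // p = p1 ∨ p = p2} ≃ ({p1, p2} : Set (List ℕ)) :=
    Equiv.subtypeEquivRight (fun p => by
      simp only [Set.mem_insert_iff, Set.mem_singleton_iff])
  rw [Nat.card_congr e2, Nat.card_coe_set_eq, Set.ncard_pair hne]
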